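/- arXiv:1108.0627 — 2 statements merged into one kernel-verified Lean document; each statement's English description precedes it below -/
import Mathlib

section
/- Let K ⊆ ℝ^n be compact. The dual cone of the conical hull C(K) of the point-evaluation functionals {ℓ_v : v ∈ K} is exactly the cone P_{2d}(K) of polynomials of degree ≤ 2d that are nonnegative on K, and consequently C(K) = P_{2d}(K)*. -/
open MeasureTheory

/-- The space of truncated moment sequences: real sequences indexed by monomials
(exponent vectors) of total degree at most `d` in `n` variables; this is the
(coordinatized) dual space `ℝ[x]_d^*`. -/
abbrev MomSpace (n d : ℕ) := {α : Fin n →₀ ℕ // (α.sum fun _ e => e) ≤ d} → ℝ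

/-- Evaluation of the monomial `x^α` at the point `v`. -/
def evalMono {n : ℕ} (v : Fin n → ℝ) (α : Fin n →₀ ℕ) : ℝ :=
  α.prod fun i k => v i ^ k

/-- The point-evaluation functional `ℓ_v` on `ℝ[x]_d`, in moment coordinates. -/
def Lmap (n d : ℕ) (v : Fin n → ℝ) : MomSpace n d := fun α => evalMono v α.1

/-- The pairing `⟨p, y⟩` between a polynomial `p` (of degree ≤ d) and a moment
sequence `y`; it equals `ℓ(p)` for the functional `ℓ` with moments `y`. -/
noncomputable def momPair {n d : ℕ} (y : MomSpace n d)
    (p : MvPolynomial (Fin n) ℝ) : ℝ :=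
  ∑ α ∈ p.support, p.coeff α *
    (if h : (α.sum fun _ e => e) ≤ d then y ⟨α, h⟩ else 0)

/-- The conical hull of a set: all finite nonnegative combinations. -/
def conicalHull {V : Type*} [AddCommMonoid V] [Module ℝ V] (s : Set V) : Set V :=
  {y | ∃ (k : ℕ) (c : Fin k → ℝ) (z : Fin k → V),
    (∀ i, 0 ≤ c i) ∧ (∀ i, z i ∈ s) ∧ y = ∑ i, c i • z i}

/-- The cone `R_{2d}(K)` of moment sequences representable by a finite Borel
measure supported on `K`. -/
def RepCone (n d : ℕ) (K : Set (Fin n → ℝ)) : Set (MomSpace n d) :=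
  {y | ∃ σ : Measure (Fin n → ℝ), IsFiniteMeasure σ ∧ σ Kᶜ = 0 ∧
    ∀ α : {α : Fin n →₀ ℕ // (α.sum fun _ e => e) ≤ d},
      y α = ∫ v in K, evalMono v α.1 ∂σ}

/-! ### Auxiliary material -/

/-- The (finite) index type of monomials of degree at most `D`. -/
abbrev MIdx (n D : ℕ) := {α : Fin n →₀ ℕ // (α.sum fun _ e => e) ≤ D}

lemma MIdx.apply_le {n D : ℕ} (a : MIdx n D) (i : Fin n) : a.1 i ≤ D := by
  refine le_trans ?_ a.2
  by_cases hi : i ∈ a.1.support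
  · exact Finset.single_le_sum (fun _ _ => Nat.zero_le _) hi
  · simp [Finsupp.notMem_support_iff.mp hi]

instance MIdx.finite (n D : ℕ) : Finite (MIdx n D) := by
  apply Finite.of_injective
    (fun a (i : Fin n) => (⟨a.1 i, Nat.lt_succ_of_le (a.apply_le i)⟩ : Fin (D + 1)))
  intro a b hab
  apply Subtype.ext
  apply Finsupp.ext
  intro i
  exact congrArg Fin.val (congrFun hab i)

noncomputable instance MIdx.fintype (n D : ℕ) : Fintype (MIdx n D) := Fintype.ofFinite _

section Pairing

variable {n D : ℕ}

lemma momPair_zero_left (p : MvPolynomial (Fin n) ℝ) : momPair (0 : MomSpace n D) p = 0 := by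
  unfold momPair
  apply Finset.sum_eq_zero
  intro α _
  split <;> simp

lemma momPair_add_left (y z : MomSpace n D) (p : MvPolynomial (Fin n) ℝ) :
    momPair (y + z) p = momPair y p + momPair z p := by
  unfold momPair
  rw [← Finset.sum_add_distrib]
  refine Finset.sum_congr rfl fun α _ => ?_
  split
  · simp only [Pi.add_apply]; ring
  · ring

lemma momPair_smul_left (a : ℝ) (y : MomSpace n D) (p : MvPolynomial (Fin n) ℝ) :
    momPair (a • y) p = a * momPair y p := by
  unfold momPair
  rw [Finset.mul_sum]
  refine Finset.sum_congr rfl fun α _ => ?_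
  split
  · simp only [Pi.smul_apply, smul_eq_mul]; ring
  · ring

lemma momPair_finset_sum_left {ι : Type*} (t : Finset ι) (f : ι → MomSpace n D)
    (p : MvPolynomial (Fin n) ℝ) :
    momPair (∑ i ∈ t, f i) p = ∑ i ∈ t, momPair (f i) p := by
  classical
  induction t using Finset.induction with
  | empty => simp [momPair_zero_left]
  | insert _ _ h ih => rw [Finset.sum_insert h, Finset.sum_insert h, momPair_add_left, ih]

lemma momPair_sum_left {k : ℕ} (c : Fin k → ℝ) (z : Fin k → MomSpace n D)
    (p : MvPolynomial (Fin n) ℝ) :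
    momPair (∑ i, c i • z i) p = ∑ i, c i * momPair (z i) p := by
  rw [momPair_finset_sum_left]
  exact Finset.sum_congr rfl fun i _ => momPair_smul_left _ _ _

lemma momPair_Lmap (v : Fin n → ℝ) {p : MvPolynomial (Fin n) ℝ} (hp : p.totalDegree ≤ D) :
    momPair (Lmap n D v) p = MvPolynomial.eval v p := by
  rw [MvPolynomial.eval_eq]
  unfold momPair
  refine Finset.sum_congr rfl fun α hα => ?_
  rw [dif_pos (le_trans (MvPolynomial.le_totalDegree hα) hp)]
  rfl

lemma momPair_eq_sum_subset (y : MomSpace n D) (p : MvPolynomial (Fin n) ℝ)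
    {s : Finset (Fin n →₀ ℕ)} (hs : p.support ⊆ s) :
    momPair y p = ∑ α ∈ s, p.coeff α *
      (if h : (α.sum fun _ e => e) ≤ D then y ⟨α, h⟩ else 0) := by
  unfold momPair
  refine Finset.sum_subset hs fun α _ hα => ?_
  rw [MvPolynomial.notMem_support_iff.mp hα, zero_mul]

lemma momPair_zero_right (y : MomSpace n D) : momPair y (0 : MvPolynomial (Fin n) ℝ) = 0 := by
  simp [momPair]

lemma momPair_add_right (y : MomSpace n D) (p q : MvPolynomial (Fin n) ℝ) :
    momPair y (p + q) = momPair y p + momPair y q := by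
  classical
  rw [momPair_eq_sum_subset y (p + q) (MvPolynomial.support_add (p := p) (q := q)),
    momPair_eq_sum_subset y p (Finset.subset_union_left),
    momPair_eq_sum_subset y q (Finset.subset_union_right), ← Finset.sum_add_distrib]
  refine Finset.sum_congr rfl fun α _ => ?_
  rw [MvPolynomial.coeff_add, add_mul]

lemma momPair_sum_right {ι : Type*} (y : MomSpace n D) (t : Finset ι)
    (f : ι → MvPolynomial (Fin n) ℝ) :
    momPair y (∑ i ∈ t, f i) = ∑ i ∈ t, momPair y (f i) := by
  classical
  induction t using Finset.induction with
  | empty => simp [momPair_zero_right]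
  | insert _ _ h ih => rw [Finset.sum_insert h, Finset.sum_insert h, momPair_add_right, ih]

lemma momPair_monomial (y : MomSpace n D) (β : Fin n →₀ ℕ) (r : ℝ) :
    momPair y (MvPolynomial.monomial β r) =
      r * (if h : (β.sum fun _ e => e) ≤ D then y ⟨β, h⟩ else 0) := by
  classical
  unfold momPair
  rcases eq_or_ne r 0 with h | h
  · simp [h, MvPolynomial.support_monomial]
  · rw [MvPolynomial.support_monomial, if_neg h, Finset.sum_singleton,
      MvPolynomial.coeff_monomial, if_pos rfl]

/-- The polynomial representing a continuous linear functional on the moment space. -/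
noncomputable def funcPoly (f : MomSpace n D →L[ℝ] ℝ) : MvPolynomial (Fin n) ℝ :=
  ∑ β : MIdx n D, MvPolynomial.monomial β.1 (f (Pi.single β 1))

lemma funcPoly_totalDegree (f : MomSpace n D →L[ℝ] ℝ) : (funcPoly f).totalDegree ≤ D := by
  classical
  refine le_trans (MvPolynomial.totalDegree_finset_sum _ _) (Finset.sup_le fun β _ => ?_)
  exact le_trans (MvPolynomial.totalDegree_monomial_le _ _) β.2

lemma momPair_funcPoly (f : MomSpace n D →L[ℝ] ℝ) (y : MomSpace n D) :
    momPair y (funcPoly f) = f y := by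
  classical
  rw [funcPoly, momPair_sum_right]
  have h1 : ∀ β : MIdx n D,
      momPair y (MvPolynomial.monomial β.1 (f (Pi.single β 1))) = f (Pi.single β 1) * y β := by
    intro β
    rw [momPair_monomial, dif_pos β.2]
  rw [Finset.sum_congr rfl fun β _ => h1 β]
  have hy : ∑ β : MIdx n D, (Pi.single β (y β) : MomSpace n D) = y := Finset.univ_sum_single y
  conv_rhs => rw [← hy]
  rw [map_sum]
  refine Finset.sum_congr rfl fun β _ => ?_
  have h2 : (Pi.single β (y β) : MomSpace n D) = y β • (Pi.single β 1 : MomSpace n D) := by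
    rw [← Pi.single_smul, smul_eq_mul, mul_one]
  rw [h2, f.map_smul, smul_eq_mul, mul_comm]

end Pairing

section Hull

variable {V : Type*} [AddCommMonoid V] [Module ℝ V] {s : Set V}

lemma mem_conicalHull_of_mem {x : V} (hx : x ∈ s) : x ∈ conicalHull s :=
  ⟨1, fun _ => 1, fun _ => x, fun _ => zero_le_one, fun _ => hx, by simp⟩

lemma zero_mem_conicalHull : (0 : V) ∈ conicalHull s :=
  ⟨0, fun i => i.elim0, fun i => i.elim0, fun i => i.elim0, fun i => i.elim0, by simp⟩

lemma smul_mem_conicalHull {a : ℝ} (ha : 0 ≤ a) {y : V} (hy : y ∈ conicalHull s) :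
    a • y ∈ conicalHull s := by
  obtain ⟨k, c, z, hc, hz, rfl⟩ := hy
  refine ⟨k, fun i => a * c i, z, fun i => mul_nonneg ha (hc i), hz, ?_⟩
  rw [Finset.smul_sum]
  refine Finset.sum_congr rfl fun i _ => ?_
  show a • c i • z i = (a * c i) • z i
  rw [smul_smul]

lemma add_mem_conicalHull {y z : V} (hy : y ∈ conicalHull s) (hz : z ∈ conicalHull s) :
    y + z ∈ conicalHull s := by
  obtain ⟨k, c, w, hc, hw, rfl⟩ := hy
  obtain ⟨k', c', w', hc', hw', rfl⟩ := hz
  refine ⟨k + k', Fin.append c c', Fin.append w w', ?_, ?_, ?_⟩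
  · intro i
    refine Fin.addCases (fun j => ?_) (fun j => ?_) i
    · rw [Fin.append_left]; exact hc j
    · rw [Fin.append_right]; exact hc' j
  · intro i
    refine Fin.addCases (fun j => ?_) (fun j => ?_) i
    · rw [Fin.append_left]; exact hw j
    · rw [Fin.append_right]; exact hw' j
  · rw [Fin.sum_univ_add]
    congr 1 <;> refine Finset.sum_congr rfl fun j _ => ?_
    · rw [Fin.append_left, Fin.append_left]
    · rw [Fin.append_right, Fin.append_right]

lemma convex_conicalHull : Convex ℝ (conicalHull s) := fun _ hx _ hy a b ha hb _ =>
  add_mem_conicalHull (smul_mem_conicalHull ha hx) (smul_mem_conicalHull hb hy)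

lemma convexHull_subset_conicalHull : convexHull ℝ s ⊆ conicalHull s :=
  convexHull_min (fun _ hx => mem_conicalHull_of_mem hx) convex_conicalHull

end Hull

section Topology

variable {n D : ℕ} {K : Set (Fin n → ℝ)}

/-- The index of the constant monomial. -/
def zeroIdx (n D : ℕ) : MIdx n D := ⟨0, by simp⟩

lemma Lmap_zeroIdx (v : Fin n → ℝ) : Lmap n D v (zeroIdx n D) = 1 := by
  simp [Lmap, evalMono, zeroIdx]

lemma continuous_Lmap : Continuous (Lmap n D) := by
  refine continuous_pi fun α => ?_
  simp only [Lmap, evalMono, Finsupp.prod]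
  exact continuous_finset_prod _ fun i _ => (continuous_apply i).pow _

lemma zeroIdx_convexHull {x : MomSpace n D} (hx : x ∈ convexHull ℝ (Lmap n D '' K)) :
    x (zeroIdx n D) = 1 := by
  have hsub : convexHull ℝ (Lmap n D '' K) ⊆ {y : MomSpace n D | y (zeroIdx n D) = 1} := by
    refine convexHull_min ?_ ?_
    · rintro _ ⟨v, _, rfl⟩
      exact Lmap_zeroIdx v
    · intro a ha b hb t u ht hu htu
      have ha' : a (zeroIdx n D) = 1 := ha
      have hb' : b (zeroIdx n D) = 1 := hb
      show (t • a + u • b) (zeroIdx n D) = 1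
      simp [Pi.add_apply, Pi.smul_apply, ha', hb', htu]
  exact hsub hx

lemma isClosed_conicalHull_Lmap (hK : IsCompact K) :
    IsClosed (conicalHull (Lmap n D '' K)) := by
  classical
  rcases K.eq_empty_or_nonempty with rfl | ⟨v₀, hv₀⟩
  · have h : conicalHull (Lmap n D '' (∅ : Set (Fin n → ℝ))) = {0} := by
      apply Set.Subset.antisymm
      · rintro y ⟨k, c, z, hc, hz, rfl⟩
        haveI : IsEmpty (Fin k) := ⟨fun i => by simpa using hz i⟩
        simp [Finset.univ_eq_empty]
      · rintro y hy
        rw [Set.mem_singleton_iff.mp hy]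
        exact zero_mem_conicalHull
    rw [h]
    exact isClosed_singleton
  · set S : Set (MomSpace n D) := Lmap n D '' K with hS
    set m : ℕ := Module.finrank ℝ (MomSpace n D) + 1 with hm
    set A : Set ((Fin m → ℝ) × (Fin m → MomSpace n D)) :=
      (stdSimplex ℝ (Fin m)) ×ˢ (Set.univ.pi fun _ => S) with hA
    have hAcomp : IsCompact A :=
      (isCompact_stdSimplex (𝕜 := ℝ) (ι := Fin m)).prod (isCompact_univ_pi fun _ => hK.image continuous_Lmap)
    set Φ : (Fin m → ℝ) × (Fin m → MomSpace n D) → MomSpace n D :=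
      fun a => ∑ i, a.1 i • a.2 i with hΦ
    have hΦc : Continuous Φ := continuous_finset_sum _ fun i _ =>
      ((continuous_apply i).comp continuous_fst).smul ((continuous_apply i).comp continuous_snd)
    have hmain : conicalHull S =
        {y : MomSpace n D | 0 ≤ y (zeroIdx n D) ∧ ∃ a ∈ A, y = y (zeroIdx n D) • Φ a} := by
      apply Set.Subset.antisymm
      · rintro y ⟨k, c, z, hc, hz, rfl⟩
        have hz1 : ∀ i, z i (zeroIdx n D) = 1 := by
          intro i
          obtain ⟨v, _, hvz⟩ := hz i
          rw [← hvz]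
          exact Lmap_zeroIdx v
        have hy0 : (∑ i, c i • z i) (zeroIdx n D) = ∑ i, c i := by
          simp [Finset.sum_apply, Pi.smul_apply, hz1]
        have hs0 : 0 ≤ ∑ i, c i := Finset.sum_nonneg fun i _ => hc i
        refine ⟨by rw [hy0]; exact hs0, ?_⟩
        rcases eq_or_lt_of_le hs0 with hseq | hslt
        · -- all coefficients vanish
          have hzero : ∀ i ∈ Finset.univ, c i = 0 :=
            (Finset.sum_eq_zero_iff_of_nonneg fun i _ => hc i).mp hseq.symm
          have hy : ∑ i, c i • z i = 0 := by
            apply Finset.sum_eq_zero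
            intro i hi
            rw [hzero i hi, zero_smul]
          refine ⟨(fun _ => (m : ℝ)⁻¹, fun _ => Lmap n D v₀), ⟨⟨fun _ => by positivity, ?_⟩,
            fun i _ => ⟨v₀, hv₀, rfl⟩⟩, ?_⟩
          · rw [Finset.sum_const, Finset.card_univ, Fintype.card_fin, nsmul_eq_mul]
            exact mul_inv_cancel₀ (Nat.cast_ne_zero.mpr (by omega))
          · rw [hy]
            simp
        · -- positive total mass
          have hx : Finset.univ.centerMass c z ∈ convexHull ℝ S :=
            Finset.centerMass_mem_convexHull _ (fun i _ => hc i) hslt (fun i _ => hz i)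
          obtain ⟨ι, hι, zz, w, hrange, hindep, hwpos, hwsum, hxeq⟩ :=
            eq_pos_convex_span_of_mem_convexHull hx
          have hcard : Fintype.card ι ≤ m := by
            rcases isEmpty_or_nonempty ι with he | he
            · simp [Fintype.card_eq_zero]
            · have h1 := hindep.finrank_vectorSpan_add_one
              have h2 : Module.finrank ℝ (vectorSpan ℝ (Set.range zz)) ≤
                  Module.finrank ℝ (MomSpace n D) := Submodule.finrank_le _
              calc Fintype.card ι
                  = Module.finrank ℝ (vectorSpan ℝ (Set.range zz)) + 1 := h1.symm
                _ ≤ Module.finrank ℝ (MomSpace n D) + 1 := Nat.succ_le_succ h2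
                _ = m := hm.symm
          obtain ⟨e⟩ : Nonempty (ι ↪ Fin m) :=
            ⟨(Fintype.equivFin ι).toEmbedding.trans (Fin.castLEEmb hcard)⟩
          have he : Function.Injective (⇑e) := e.injective
          have hvanish : ∀ j : Fin m, (¬ ∃ i, e i = j) →
              Function.extend (⇑e) w (fun _ => 0) j = 0 := by
            intro j hj
            rw [Function.extend_apply' _ _ _ hj]
          have hsplit : (Finset.univ : Finset (Fin m)) =
              Finset.univ.image e ∪ (Finset.univ \ Finset.univ.image e) := by
            rw [Finset.union_sdiff_of_subset (Finset.subset_univ _)]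
          have hnotim : ∀ j : Fin m, j ∈ Finset.univ \ Finset.univ.image e →
              ¬ ∃ i, e i = j := by
            intro j hj ⟨i, hi⟩
            exact (Finset.mem_sdiff.mp hj).2 (Finset.mem_image.mpr ⟨i, Finset.mem_univ i, hi⟩)
          have hredw : ∑ j, Function.extend (⇑e) w (fun _ => 0) j = ∑ i, w i := by
            rw [hsplit, Finset.sum_union (Finset.disjoint_sdiff)]
            rw [Finset.sum_eq_zero
              (fun (j : Fin m) (hj : j ∈ Finset.univ \ Finset.univ.image e) =>
                hvanish j (hnotim j hj)), add_zero]
            rw [Finset.sum_image (fun a _ b _ hab => he hab)]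
            exact Finset.sum_congr rfl fun i _ => he.extend_apply _ _ _
          have hredz : ∑ j, Function.extend (⇑e) w (fun _ => 0) j •
              Function.extend (⇑e) zz (fun _ => Lmap n D v₀) j = ∑ i, w i • zz i := by
            rw [hsplit, Finset.sum_union (Finset.disjoint_sdiff)]
            rw [Finset.sum_eq_zero
              (fun (j : Fin m) (hj : j ∈ Finset.univ \ Finset.univ.image e) => by
                rw [hvanish j (hnotim j hj), zero_smul]), add_zero]
            rw [Finset.sum_image (fun a _ b _ hab => he hab)]
            refine Finset.sum_congr rfl fun i _ => ?_
            rw [he.extend_apply, he.extend_apply]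
          have hw'nonneg : ∀ j : Fin m, 0 ≤ Function.extend (⇑e) w (fun _ => 0) j := by
            intro j
            rcases em (∃ i, e i = j) with ⟨i, rfl⟩ | hj
            · rw [he.extend_apply]
              exact (hwpos i).le
            · rw [hvanish j hj]
          have hz'mem : ∀ j : Fin m, Function.extend (⇑e) zz (fun _ => Lmap n D v₀) j ∈ S := by
            intro j
            rcases em (∃ i, e i = j) with ⟨i, rfl⟩ | hj
            · rw [he.extend_apply]
              exact hrange ⟨i, rfl⟩
            · rw [Function.extend_apply' _ _ _ hj]
              exact ⟨v₀, hv₀, rfl⟩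
          have hfin : ∑ i, c i • z i =
              ((∑ i, c i • z i) (zeroIdx n D)) •
                Φ (Function.extend (⇑e) w (fun _ => 0),
                   Function.extend (⇑e) zz (fun _ => Lmap n D v₀)) := by
            rw [hy0]
            have hΦx : Φ (Function.extend (⇑e) w (fun _ => 0),
                Function.extend (⇑e) zz (fun _ => Lmap n D v₀)) =
                Finset.univ.centerMass c z := by
              show (∑ j, Function.extend (⇑e) w (fun _ => 0) j •
                Function.extend (⇑e) zz (fun _ => Lmap n D v₀) j) = _
              rw [hredz, hxeq]
            rw [hΦx, Finset.centerMass, smul_smul, mul_inv_cancel₀ (ne_of_gt hslt), one_smul]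
          exact ⟨(Function.extend (⇑e) w (fun _ => 0),
            Function.extend (⇑e) zz (fun _ => Lmap n D v₀)),
            ⟨⟨hw'nonneg, by rw [hredw, hwsum]⟩, fun j _ => hz'mem j⟩, hfin⟩
      · rintro y ⟨h0, ⟨w, z'⟩, hA', hyeq⟩
        rw [hyeq]
        apply smul_mem_conicalHull h0
        obtain ⟨hw, hz'⟩ := hA'
        exact ⟨m, w, z', fun i => hw.1 i, fun i => hz' i (Set.mem_univ i), rfl⟩
    rw [hmain]
    apply IsSeqClosed.isClosed
    intro ys y hmem hlim
    have h1 : ∀ k, 0 ≤ ys k (zeroIdx n D) := fun k => (hmem k).1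
    choose a haA haeq using fun k => (hmem k).2
    obtain ⟨b, hbA, φ, hφ, hblim⟩ := hAcomp.tendsto_subseq haA
    have hys : Filter.Tendsto (ys ∘ φ) Filter.atTop (nhds y) := hlim.comp hφ.tendsto_atTop
    have hcoord : Filter.Tendsto (fun k => ys (φ k) (zeroIdx n D)) Filter.atTop
        (nhds (y (zeroIdx n D))) := ((continuous_apply (zeroIdx n D)).tendsto y).comp hys
    have hΦlim : Filter.Tendsto (fun k => Φ (a (φ k))) Filter.atTop (nhds (Φ b)) :=
      (hΦc.tendsto b).comp hblim
    have hprod : Filter.Tendsto (fun k => ys (φ k) (zeroIdx n D) • Φ (a (φ k)))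
        Filter.atTop (nhds (y (zeroIdx n D) • Φ b)) := hcoord.smul hΦlim
    have heq : (fun k => ys (φ k) (zeroIdx n D) • Φ (a (φ k))) = ys ∘ φ :=
      funext fun k => (haeq (φ k)).symm
    rw [heq] at hprod
    refine ⟨ge_of_tendsto' hcoord fun k => h1 (φ k), b, hbA, tendsto_nhds_unique hys hprod⟩

end Topology

/-- For `K ⊆ ℝ^n` compact: the dual cone of `C(K) = ConicalHull{ℓ_v : v ∈ K}` (within
polynomials of degree ≤ 2d) is the cone `P_{2d}(K)` of polynomials nonnegative on `K`,
and consequently `C(K)` is the dual cone of `P_{2d}(K)`. -/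
theorem stmt12 {n d : ℕ} (K : Set (Fin n → ℝ)) (hK : IsCompact K) :
    ({p : MvPolynomial (Fin n) ℝ | p.totalDegree ≤ 2 * d ∧
        ∀ y ∈ conicalHull (Lmap n (2 * d) '' K), 0 ≤ momPair y p} =
      {p : MvPolynomial (Fin n) ℝ | p.totalDegree ≤ 2 * d ∧
        ∀ v ∈ K, 0 ≤ MvPolynomial.eval v p}) ∧
    conicalHull (Lmap n (2 * d) '' K) =
      {y : MomSpace n (2 * d) | ∀ p : MvPolynomial (Fin n) ℝ,
        p.totalDegree ≤ 2 * d → (∀ v ∈ K, 0 ≤ MvPolynomial.eval v p) →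
          0 ≤ momPair y p} := by
  classical
  constructor
  · -- Part 1
    ext p
    simp only [Set.mem_setOf_eq]
    constructor
    · rintro ⟨hdeg, hpos⟩
      refine ⟨hdeg, fun v hv => ?_⟩
      have := hpos (Lmap n (2 * d) v) (mem_conicalHull_of_mem ⟨v, hv, rfl⟩)
      rwa [momPair_Lmap v hdeg] at this
    · rintro ⟨hdeg, hpos⟩
      refine ⟨hdeg, ?_⟩
      rintro y ⟨k, c, z, hc, hz, rfl⟩
      rw [momPair_sum_left]
      refine Finset.sum_nonneg fun i _ => mul_nonneg (hc i) ?_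
      obtain ⟨v, hv, hvz⟩ := hz i
      rw [← hvz, momPair_Lmap v hdeg]
      exact hpos v hv
  · -- Part 2
    ext y
    simp only [Set.mem_setOf_eq]
    constructor
    · rintro ⟨k, c, z, hc, hz, rfl⟩ p hdeg hpos
      rw [momPair_sum_left]
      refine Finset.sum_nonneg fun i _ => mul_nonneg (hc i) ?_
      obtain ⟨v, hv, hvz⟩ := hz i
      rw [← hvz, momPair_Lmap v hdeg]
      exact hpos v hv
    · intro hy
      by_contra hy'
      have hcl := isClosed_conicalHull_Lmap (D := 2 * d) hK
      have hconv := convex_conicalHull (s := Lmap n (2 * d) '' K)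
      obtain ⟨f, u, hfu, huy⟩ := geometric_hahn_banach_closed_point hconv hcl hy'
      have h0 : (0 : ℝ) < u := by
        have := hfu 0 zero_mem_conicalHull
        simpa using this
      have hfle : ∀ a ∈ conicalHull (Lmap n (2 * d) '' K), f a ≤ 0 := by
        intro a ha
        by_contra h
        push_neg at h
        have hmem := smul_mem_conicalHull (div_nonneg h0.le h.le) ha
        have := hfu _ hmem
        rw [f.map_smul, smul_eq_mul, div_mul_cancel₀ _ (ne_of_gt h)] at this
        exact lt_irrefl u this
      have hnonneg : ∀ v ∈ K, 0 ≤ MvPolynomial.eval v (funcPoly (-f)) := by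
        intro v hv
        have hm : Lmap n (2 * d) v ∈ conicalHull (Lmap n (2 * d) '' K) :=
          mem_conicalHull_of_mem ⟨v, hv, rfl⟩
        have h1 := hfle _ hm
        rw [← momPair_Lmap v (funcPoly_totalDegree (-f)), momPair_funcPoly]
        simp only [ContinuousLinearMap.neg_apply, neg_nonneg]
        exact h1
      have key := hy (funcPoly (-f)) (funcPoly_totalDegree (-f)) hnonneg
      rw [momPair_funcPoly] at key
      simp only [ContinuousLinearMap.neg_apply, le_neg] at key
      linarith
end

section
/- Corollary: With K, μ as in the compact-case theorem, every y in the interior of R_{2d}(K) has a representing measure of the form dν = e^{p} dμ for some polynomial p of degree ≤ 2d, i.e., y(x^α) = ∫_K x^α e^{p(x)} dμ(x) for all |α| ≤ 2d. -/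
open MeasureTheory

open scoped ENNReal

set_option synthInstance.maxHeartbeats 1000000
set_option maxHeartbeats 2000000

abbrev Idx (n m : ℕ) := {α : Fin n →₀ ℕ // (α.sum fun _ e => e) ≤ m}

lemma apply_le_degsum {n m : ℕ} (α : Fin n →₀ ℕ) (h : (α.sum fun _ e => e) ≤ m) (i : Fin n) :
    α i ≤ m := by
  refine le_trans ?_ h
  by_cases hi : i ∈ α.support
  · exact Finset.single_le_sum (fun j _ => Nat.zero_le _) hi
  · simp [Finsupp.notMem_support_iff.mp hi]

noncomputable instance {n m : ℕ} : Fintype (Idx n m) := by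
  apply Fintype.ofInjective (fun α => (fun i => (⟨α.1 i, Nat.lt_succ_of_le (apply_le_degsum α.1 α.2 i)⟩ : Fin (m+1))))
  intro a b hab
  ext i
  simpa using congrArg Fin.val (congrFun hab i)

noncomputable instance {n m : ℕ} : DecidableEq (Idx n m) := Classical.decEq _

lemma continuous_evalMono {n : ℕ} (α : Fin n →₀ ℕ) : Continuous fun v : Fin n → ℝ => evalMono v α := by
  unfold evalMono Finsupp.prod
  exact continuous_finset_prod _ fun i _ => (continuous_apply i).pow _

noncomputable def gfun {n m : ℕ} (c : Idx n m → ℝ) (x : Fin n → ℝ) : ℝ :=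
  ∑ α : Idx n m, c α * evalMono x α.1

noncomputable def polyOf {n m : ℕ} (c : Idx n m → ℝ) : MvPolynomial (Fin n) ℝ :=
  ∑ α : Idx n m, MvPolynomial.monomial α.1 (c α)

lemma eval_polyOf {n m : ℕ} (c : Idx n m → ℝ) (x : Fin n → ℝ) :
    MvPolynomial.eval x (polyOf c) = gfun c x := by
  simp [polyOf, gfun, MvPolynomial.eval_monomial, evalMono]

lemma totalDegree_polyOf {n m : ℕ} (c : Idx n m → ℝ) : (polyOf c).totalDegree ≤ m := by
  refine le_trans (MvPolynomial.totalDegree_finset_sum _ _) ?_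
  refine Finset.sup_le fun α _ => le_trans (MvPolynomial.totalDegree_monomial_le _ _) α.2

lemma coeff_polyOf {n m : ℕ} (c : Idx n m → ℝ) (α : Idx n m) :
    (polyOf c).coeff α.1 = c α := by
  rw [polyOf, MvPolynomial.coeff_sum]
  rw [Finset.sum_eq_single α]
  · simp
  · intro β _ hβ
    rw [MvPolynomial.coeff_monomial, if_neg]
    intro h; exact hβ (Subtype.ext h)
  · simp

noncomputable def pair {n m : ℕ} (y c : Idx n m → ℝ) : ℝ := ∑ α, c α * y α

lemma gfun_smul {n m : ℕ} (s : ℝ) (c : Idx n m → ℝ) (x : Fin n → ℝ) :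
    gfun (s • c) x = s * gfun c x := by
  simp [gfun, Finset.mul_sum, mul_assoc]

lemma pair_smul {n m : ℕ} (y : Idx n m → ℝ) (s : ℝ) (c : Idx n m → ℝ) :
    pair y (s • c) = s * pair y c := by
  simp [pair, Finset.mul_sum, mul_assoc]

lemma gfun_add_single {n m : ℕ} (c : Idx n m → ℝ) (α : Idx n m) (t : ℝ) (x : Fin n → ℝ) :
    gfun (c + t • (Pi.single α 1 : Idx n m → ℝ)) x = gfun c x + t * evalMono x α.1 := by
  simp only [gfun, Pi.add_apply, Pi.smul_apply, add_mul, Finset.sum_add_distrib, smul_eq_mul]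
  congr 1
  rw [Finset.sum_eq_single α]
  · simp
  · intro β _ hβ; simp [Pi.single_apply, hβ]
  · simp

lemma pair_single {n m : ℕ} (y : Idx n m → ℝ) (α : Idx n m) :
    pair y (Pi.single α 1) = y α := by
  rw [pair, Finset.sum_eq_single α]
  · simp
  · intro β _ hβ; simp [Pi.single_apply, hβ]
  · simp

lemma abs_pair_le {n m : ℕ} (y c : Idx n m → ℝ) :
    |pair y c| ≤ ‖c‖ * ∑ α, |y α| := by
  refine le_trans (Finset.abs_sum_le_sum_abs _ _) ?_
  rw [Finset.mul_sum]
  refine Finset.sum_le_sum fun α _ => ?_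
  rw [abs_mul]
  exact mul_le_mul_of_nonneg_right (norm_le_pi_norm c α) (abs_nonneg _)

lemma continuous_gfun_c {n m : ℕ} (x : Fin n → ℝ) : Continuous fun c : Idx n m → ℝ => gfun c x :=
  continuous_finset_sum _ fun α _ => (continuous_apply α).mul continuous_const

lemma continuous_pair {n m : ℕ} (y : Idx n m → ℝ) : Continuous (pair y) :=
  continuous_finset_sum _ fun α _ => (continuous_apply α).mul continuous_const

/-- A multivariate real polynomial whose evaluation vanishes on a nonempty open set is zero. -/
lemma mvpoly_eq_zero_of_zero_on_open {n : ℕ} (U : Set (Fin n → ℝ)) (hU : IsOpen U)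
    (hne : U.Nonempty) (p : MvPolynomial (Fin n) ℝ)
    (hvan : ∀ x ∈ U, MvPolynomial.eval x p = 0) : p = 0 := by
  obtain ⟨a, ha⟩ := hne
  obtain ⟨δ, hδ, hball⟩ := Metric.isOpen_iff.mp hU a ha
  -- for each direction v, the univariate polynomial t ↦ p (a + t v) vanishes
  have key : ∀ x : Fin n → ℝ, MvPolynomial.eval x p = 0 := by
    intro x
    set v : Fin n → ℝ := x - a with hv
    set q : Polynomial ℝ :=
      MvPolynomial.aeval (fun i => Polynomial.C (a i) + Polynomial.C (v i) * Polynomial.X) p with hq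
    have hqeval : ∀ t : ℝ, q.eval t = MvPolynomial.eval (a + t • v) p := by
      intro t
      have : (Polynomial.aeval t).comp
          (MvPolynomial.aeval (fun i => Polynomial.C (a i) + Polynomial.C (v i) * Polynomial.X)) =
          MvPolynomial.aeval (R := ℝ) (fun i => a i + v i * t) := by
        rw [MvPolynomial.comp_aeval]
        congr 1
        funext i
        simp
      have h2 := congrArg (fun φ => φ p) this
      simp only [AlgHom.comp_apply] at h2
      have : Polynomial.aeval t q = MvPolynomial.aeval (R := ℝ) (fun i => a i + v i * t) p := h2
      have e1 : Polynomial.aeval t q = q.eval t := by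
        rw [← Polynomial.coe_aeval_eq_eval]
      have e2 : MvPolynomial.aeval (R := ℝ) (fun i => a i + v i * t) p =
          MvPolynomial.eval (fun i => a i + v i * t) p := by
        rw [← MvPolynomial.coe_aeval_eq_eval]; rfl
      rw [e1, e2] at this
      have hfun : (fun i => a i + v i * t) = a + t • v := by
        funext i; simp [mul_comm]
      rw [this, hfun]
    -- q vanishes on an interval
    have hroots : ∀ t ∈ Set.Ioo (-(δ / (1 + ‖v‖))) (δ / (1 + ‖v‖)), q.IsRoot t := by
      intro t ht
      have hmem : a + t • v ∈ U := by
        apply hball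
        simp only [Metric.mem_ball, dist_eq_norm]
        have : a + t • v - a = t • v := by abel
        rw [this, norm_smul]
        have h1 : ‖t‖ < δ / (1 + ‖v‖) := by
          rw [Real.norm_eq_abs, abs_lt]; exact ⟨ht.1, ht.2⟩
        have h2 : (0:ℝ) < 1 + ‖v‖ := by positivity
        calc ‖t‖ * ‖v‖ ≤ ‖t‖ * (1 + ‖v‖) := by nlinarith [norm_nonneg v, norm_nonneg t]
          _ < δ / (1 + ‖v‖) * (1 + ‖v‖) := by nlinarith [norm_nonneg t]
          _ = δ := by field_simp
      simpa [Polynomial.IsRoot, hqeval t] using hvan _ hmem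
    have hq0 : q = 0 := by
      apply Polynomial.eq_zero_of_infinite_isRoot
      apply Set.Infinite.mono (fun t ht => hroots t ht)
      have h0 : (0:ℝ) < δ / (1 + ‖v‖) := by positivity
      exact Set.infinite_coe_iff.mp (Set.Ioo.infinite (by linarith))
    have := hqeval 1
    rw [hq0] at this
    simp only [Polynomial.eval_zero] at this
    have hx : a + (1:ℝ) • v = x := by simp [hv]
    rw [hx] at this
    exact this.symm
  exact MvPolynomial.funext key

lemma continuous_gfun_x {n m : ℕ} (c : Idx n m → ℝ) : Continuous (gfun c) :=
  continuous_finset_sum _ fun α _ => continuous_const.mul (continuous_evalMono α.1)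

/-- Pairing of a representable moment vector with a polynomial nonnegative on K. -/
lemma pair_nonneg_of_repCone {n m : ℕ} {K : Set (Fin n → ℝ)} (hKc : IsCompact K)
    (hKm : MeasurableSet K) {z : MomSpace n m} (hz : z ∈ RepCone n m K)
    (c : Idx n m → ℝ) (hc : ∀ x ∈ K, 0 ≤ gfun c x) : 0 ≤ pair z c := by
  obtain ⟨σ, hfin, -, hmom⟩ := hz
  have hint : ∀ α : Idx n m, IntegrableOn (fun v => evalMono v α.1) K σ := by
    intro α
    exact ((continuous_evalMono α.1).continuousOn).integrableOn_compact hKc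
  have : pair z c = ∫ v in K, gfun c v ∂σ := by
    simp only [pair, gfun]
    rw [MeasureTheory.integral_finset_sum]
    · refine Finset.sum_congr rfl fun α _ => ?_
      rw [hmom α, MeasureTheory.integral_const_mul]
    · intro α _
      exact (hint α).const_mul _
  rw [this]
  exact setIntegral_nonneg hKm hc

/-- Strict positivity of interior points against nonzero polynomials nonpositive... -/
lemma pair_neg_of_interior {n m : ℕ} {U K : Set (Fin n → ℝ)} (hU : IsOpen U)
    (hUne : U.Nonempty) (hK : K = closure U) (hKc : IsCompact K) (hKm : MeasurableSet K)
    {y : MomSpace n m} (hy : y ∈ interior (RepCone n m K))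
    (c : Idx n m → ℝ) (hc0 : c ≠ 0) (hc : ∀ x ∈ K, gfun c x ≤ 0) : pair y c < 0 := by
  -- find v0 ∈ U with gfun c v0 < 0
  have hpoly : ∃ v0 ∈ U, gfun c v0 < 0 := by
    by_contra h
    push_neg at h
    have hvan : ∀ x ∈ U, gfun c x = 0 := by
      intro x hx
      have h1 : x ∈ K := hK ▸ subset_closure hx
      exact le_antisymm (hc x h1) (h x hx)
    have hp0 : polyOf c = 0 :=
      mvpoly_eq_zero_of_zero_on_open U hU hUne _ (fun x hx => by
        rw [eval_polyOf]; exact hvan x hx)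
    apply hc0
    funext α
    have := coeff_polyOf c α
    rw [hp0, MvPolynomial.coeff_zero] at this
    exact (this.symm : c α = 0)
  obtain ⟨v0, hv0U, hv0⟩ := hpoly
  -- ball around y inside the cone
  obtain ⟨ε, hε, hball⟩ := Metric.isOpen_iff.mp isOpen_interior y hy
  set w : MomSpace n m := Lmap n m v0 with hw
  set t : ℝ := ε / (2 * (‖w‖ + 1)) with ht
  have htpos : 0 < t := by positivity
  have hmem : y - t • w ∈ RepCone n m K := by
    apply interior_subset
    apply hball
    simp only [Metric.mem_ball, dist_eq_norm]
    have : y - t • w - y = -(t • w) := by abel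
    rw [this, norm_neg, norm_smul, Real.norm_eq_abs, abs_of_pos htpos]
    have h2 : t * (‖w‖ + 1) = ε / 2 := by
      rw [ht]; field_simp
    nlinarith [norm_nonneg w]
  have h1 : 0 ≤ pair (y - t • w) (-c) :=
    pair_nonneg_of_repCone hKc hKm hmem (-c) (by
      intro x hx
      have : gfun (-c) x = - gfun c x := by simp [gfun]
      rw [this]
      linarith [hc x hx])
  have h2 : pair (y - t • w) (-c) = -(pair y c) + t * pair w c := by
    simp only [pair, Pi.neg_apply, Pi.sub_apply, Pi.smul_apply, smul_eq_mul,
      Finset.mul_sum, ← Finset.sum_neg_distrib, ← Finset.sum_add_distrib]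
    exact Finset.sum_congr rfl fun α _ => by ring
  have h3 : pair w c = gfun c v0 := by
    simp [pair, gfun, hw, Lmap]
  rw [h2, h3] at h1
  nlinarith

lemma measure_pos_of_open_subset {n : ℕ} {K V : Set (Fin n → ℝ)}
    (hKm : MeasurableSet K) (hV : IsOpen V) (hVne : V.Nonempty) (hVK : V ⊆ K)
    (ρ : (Fin n → ℝ) → ℝ≥0∞) (hρmeas : Measurable ρ)
    (hρpos : ∀ x ∈ K, 0 < ρ x)
    (μ : Measure (Fin n → ℝ)) (hμ : μ = (volume.restrict K).withDensity ρ) :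
    0 < μ V := by
  rw [hμ, withDensity_apply _ hV.measurableSet, Measure.restrict_restrict hV.measurableSet]
  have hVK' : V ∩ K = V := Set.inter_eq_self_of_subset_left hVK
  rw [hVK']
  rw [lintegral_pos_iff_support hρmeas]
  rw [Measure.restrict_apply (measurableSet_support hρmeas)]
  have : V ⊆ Function.support ρ := fun x hx => (hρpos x (hVK hx)).ne'
  rw [Set.inter_eq_self_of_subset_right this]
  exact hV.measure_pos volume hVne

lemma exp_beats_linear (a b C : ℝ) (ha : 0 < a) :
    ∃ T : ℝ, ∀ s ≥ T, C < a * Real.exp s - b * s := by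
  have h := Real.tendsto_exp_div_pow_atTop 1
  simp only [pow_one] at h
  have h2 : ∀ᶠ s in Filter.atTop, (|b| + |C| + 1) / a ≤ Real.exp s / s :=
    h.eventually_ge_atTop _
  obtain ⟨T₀, hT₀⟩ := h2.exists_forall_of_atTop
  refine ⟨max T₀ 1, fun s hs => ?_⟩
  have hs1 : (1:ℝ) ≤ s := le_trans (le_max_right _ _) hs
  have hsp : (0:ℝ) < s := by linarith
  have h3 : (|b| + |C| + 1) / a ≤ Real.exp s / s := hT₀ s (le_trans (le_max_left _ _) hs)
  have h4 : s * ((|b| + |C| + 1) / a) ≤ Real.exp s := by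
    have := mul_le_mul_of_nonneg_left h3 hsp.le
    rwa [mul_div_cancel₀ _ hsp.ne'] at this
  have h5 : s * (|b| + |C| + 1) ≤ a * Real.exp s := by
    have := mul_le_mul_of_nonneg_left h4 ha.le
    calc s * (|b| + |C| + 1) = a * (s * ((|b| + |C| + 1) / a)) := by field_simp
      _ ≤ a * Real.exp s := this
  have hb : b * s ≤ |b| * s := mul_le_mul_of_nonneg_right (le_abs_self b) (le_of_lt hsp)
  have hC : C ≤ |C| := le_abs_self C
  have h6 : |C| + 1 ≤ s * (|C| + 1) := by nlinarith [abs_nonneg C]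
  have h7 : s * (|b| + |C| + 1) = |b| * s + s * (|C| + 1) := by ring
  linarith


lemma pair_add {n m : ℕ} (y c c' : Idx n m → ℝ) : pair y (c + c') = pair y c + pair y c' := by
  simp [pair, add_mul, Finset.sum_add_distrib]

lemma gfun_sub {n m : ℕ} (c c' : Idx n m → ℝ) (x : Fin n → ℝ) :
    gfun (c - c') x = gfun c x - gfun c' x := by
  simp [gfun, sub_mul, Finset.sum_sub_distrib]

/-- Corollary (compact case): every `y` in the interior of `R_{2d}(K)` has a
representing measure of the form `dν = e^p dμ` for some polynomial `p` of degree
≤ 2d, i.e. `y_α = ∫_K x^α e^{p(x)} dμ(x)` for all `|α| ≤ 2d`. -/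
theorem stmt16 {n d : ℕ} (U K : Set (Fin n → ℝ))
    (hU : IsOpen U) (hUne : U.Nonempty) (hUb : Bornology.IsBounded U)
    (hK : K = closure U)
    (ρ : (Fin n → ℝ) → ℝ≥0∞) (hρmeas : Measurable ρ)
    (hρpos : ∀ x ∈ K, 0 < ρ x)
    (μ : Measure (Fin n → ℝ)) (hμ : μ = (volume.restrict K).withDensity ρ)
    [IsFiniteMeasure μ]
    (y : MomSpace n (2 * d)) (hy : y ∈ interior (RepCone n (2 * d) K)) :
    ∃ p : MvPolynomial (Fin n) ℝ, p.totalDegree ≤ 2 * d ∧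
      ∀ α : {α : Fin n →₀ ℕ // (α.sum fun _ e => e) ≤ 2 * d},
        y α = ∫ x in K, evalMono x α.1 * Real.exp (MvPolynomial.eval x p) ∂μ := by
  classical
  have hKcl : IsClosed K := by rw [hK]; exact isClosed_closure
  have hKm : MeasurableSet K := hKcl.measurableSet
  have hKc : IsCompact K := by
    rw [hK]
    exact Metric.isCompact_of_isClosed_isBounded isClosed_closure hUb.closure
  have hKne : K.Nonempty := by
    obtain ⟨v, hv⟩ := hUne
    exact ⟨v, hK ▸ subset_closure hv⟩
  haveI : IsFiniteMeasure (μ.restrict K) :=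
    ⟨by rw [Measure.restrict_apply_univ]; exact measure_lt_top μ K⟩
  -- uniform bound on monomials over K
  set f : (Fin n → ℝ) → ℝ := fun x => ∑ α : Idx n (2*d), |evalMono x α.1| with hf
  have hfc : ContinuousOn f K :=
    (continuous_finset_sum _ fun α _ => (continuous_evalMono α.1).abs).continuousOn
  obtain ⟨xm, hxmK, hxm⟩ := hKc.exists_isMaxOn hKne hfc
  set C : ℝ := max 1 (f xm) with hCdef
  have hC1 : (1:ℝ) ≤ C := le_max_left _ _
  have hC0 : (0:ℝ) < C := lt_of_lt_of_le one_pos hC1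
  have hfC : ∀ x ∈ K, f x ≤ C := fun x hx => le_trans (hxm hx) (le_max_right _ _)
  have hgb : ∀ (c : Idx n (2*d) → ℝ), ∀ x ∈ K, |gfun c x| ≤ ‖c‖ * C := by
    intro c x hx
    refine le_trans (Finset.abs_sum_le_sum_abs _ _) ?_
    calc ∑ α : Idx n (2*d), |c α * evalMono x α.1|
        ≤ ∑ α : Idx n (2*d), ‖c‖ * |evalMono x α.1| := by
          refine Finset.sum_le_sum fun α _ => ?_
          rw [abs_mul]
          exact mul_le_mul_of_nonneg_right (norm_le_pi_norm c α) (abs_nonneg _)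
      _ = ‖c‖ * f x := by rw [hf, Finset.mul_sum]
      _ ≤ ‖c‖ * C := mul_le_mul_of_nonneg_left (hfC x hx) (norm_nonneg c)
  set Φ : (Idx n (2*d) → ℝ) → ℝ := fun c => ∫ x in K, Real.exp (gfun c x) ∂μ with hΦ
  set G : (Idx n (2*d) → ℝ) → ℝ := fun c => Φ c - pair y c with hGdef
  have hintexp : ∀ c : Idx n (2*d) → ℝ, IntegrableOn (fun x => Real.exp (gfun c x)) K μ :=
    fun c => ((Real.continuous_exp.comp (continuous_gfun_x c)).continuousOn).integrableOn_compact hKc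
  have hΦnn : ∀ c, 0 ≤ Φ c := fun c => setIntegral_nonneg hKm (fun x _ => (Real.exp_pos _).le)
  have hΦc : Continuous Φ := by
    rw [continuous_iff_continuousAt]
    intro c₀
    apply MeasureTheory.continuousAt_of_dominated
      (bound := fun _ => Real.exp ((‖c₀‖ + 1) * C))
    · exact Filter.Eventually.of_forall fun c =>
        (Real.continuous_exp.comp (continuous_gfun_x c)).aestronglyMeasurable
    · have hball : ∀ᶠ c in nhds c₀, c ∈ Metric.ball c₀ 1 := Metric.ball_mem_nhds c₀ one_pos
      refine hball.mono fun c hc => ?_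
      refine (ae_restrict_mem hKm).mono fun x hx => ?_
      rw [Real.norm_eq_abs, abs_of_pos (Real.exp_pos _), Real.exp_le_exp]
      have h1 : gfun c x ≤ ‖c‖ * C := le_trans (le_abs_self _) (hgb c x hx)
      have h2 : ‖c‖ ≤ ‖c₀‖ + 1 := by
        have h3 : ‖c - c₀‖ < 1 := by
          rw [← dist_eq_norm]; exact Metric.mem_ball.mp hc
        have h4 := norm_sub_norm_le c c₀
        linarith
      nlinarith
    · exact integrable_const _
    · exact Filter.Eventually.of_forall fun x =>
        (Real.continuous_exp.comp (continuous_gfun_c x)).continuousAt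
  have hGc : Continuous G := hΦc.sub (continuous_pair y)
  -- bounded sublevel set
  have hbdd : ∃ R : ℝ, ∀ c : Idx n (2*d) → ℝ, G c ≤ G 0 → ‖c‖ ≤ R := by
    by_contra hcon
    push_neg at hcon
    choose cs hcs1 hcs2 using fun k : ℕ => hcon (k : ℝ)
    have hcsp : ∀ k, 0 < ‖cs k‖ := fun k => lt_of_le_of_lt (Nat.cast_nonneg k) (hcs2 k)
    set us : ℕ → (Idx n (2*d) → ℝ) := fun k => (‖cs k‖)⁻¹ • cs k with hus
    have husmem : ∀ k, us k ∈ Metric.sphere (0 : Idx n (2*d) → ℝ) 1 := by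
      intro k
      simp only [hus, Metric.mem_sphere, dist_zero_right, norm_smul, norm_inv, norm_norm]
      exact inv_mul_cancel₀ (hcsp k).ne'
    obtain ⟨u, humem, φ, hφmono, hconv⟩ :=
      (isCompact_sphere (0 : Idx n (2*d) → ℝ) 1).tendsto_subseq husmem
    have hu1 : ‖u‖ = 1 := by simpa using humem
    have hcu : ∀ k, cs k = ‖cs k‖ • us k := fun k => (smul_inv_smul₀ (hcsp k).ne' (cs k)).symm
    set Cy : ℝ := ∑ β : Idx n (2*d), |y β| with hCy
    have hpairb : ∀ c : Idx n (2*d) → ℝ, pair y c ≤ ‖c‖ * Cy := fun c =>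
      le_trans (le_abs_self _) (abs_pair_le y c)
    have hφk : ∀ k : ℕ, (k : ℝ) ≤ ‖cs (φ k)‖ := by
      intro k
      exact le_trans (Nat.cast_le.mpr hφmono.le_apply) (hcs2 (φ k)).le
    by_cases hcase : ∃ x ∈ K, 0 < gfun u x
    · obtain ⟨x₀, hx₀K, hx₀⟩ := hcase
      set ε : ℝ := gfun u x₀ / 2 with hε
      have hεp : 0 < ε := half_pos hx₀
      set W : Set (Fin n → ℝ) := {x | ε < gfun u x} with hW
      have hWo : IsOpen W := isOpen_lt continuous_const (continuous_gfun_x u)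
      have hx₀W : x₀ ∈ W := by
        simp only [hW, Set.mem_setOf_eq, hε]
        linarith
      set V := U ∩ W with hV
      have hVo : IsOpen V := hU.inter hWo
      have hVne : V.Nonempty := by
        have hx₀cl : x₀ ∈ closure U := hK ▸ hx₀K
        obtain ⟨z, hz1, hz2⟩ := mem_closure_iff.mp hx₀cl W hWo hx₀W
        exact ⟨z, hz2, hz1⟩
      have hVK : V ⊆ K := fun x hx => hK ▸ subset_closure hx.1
      have hμV : 0 < μ V := measure_pos_of_open_subset hKm hVo hVne hVK ρ hρmeas hρpos μ hμ
      have hμVfin : μ V ≠ ⊤ := (measure_lt_top μ V).ne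
      set a : ℝ := (μ V).toReal with ha
      have hap : 0 < a := ENNReal.toReal_pos hμV.ne' hμVfin
      obtain ⟨T, hT⟩ := exp_beats_linear a (2 * Cy / ε) (G 0) hap
      have hev1 : ∀ᶠ k in Filter.atTop, dist (us (φ k)) u < ε / (2 * C) :=
        hconv.eventually (Metric.ball_mem_nhds u (by positivity))
      have hev2 : ∀ᶠ k : ℕ in Filter.atTop, 2 * T / ε ≤ (k : ℝ) :=
        (tendsto_natCast_atTop_atTop (R := ℝ)).eventually_ge_atTop _
      obtain ⟨k, hk1, hk2⟩ := (hev1.and hev2).exists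
      set c := cs (φ k) with hc
      set s : ℝ := ‖cs (φ k)‖ with hs
      have hsp : 0 < s := hcsp _
      have hsk : (k : ℝ) ≤ s := hφk k
      have hnrm : ‖us (φ k) - u‖ < ε / (2 * C) := by
        rw [← dist_eq_norm]; exact hk1
      have hgV : ∀ x ∈ V, ε / 2 * s ≤ gfun c x := by
        intro x hx
        have hxK : x ∈ K := hVK hx
        have h1 : |gfun (us (φ k)) x - gfun u x| ≤ ‖us (φ k) - u‖ * C := by
          rw [← gfun_sub]
          exact hgb _ x hxK
        have h3 : ‖us (φ k) - u‖ * C ≤ ε / 2 := by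
          have h4 := mul_le_mul_of_nonneg_right hnrm.le hC0.le
          have h5 : ε / (2 * C) * C = ε / 2 := by field_simp
          linarith
        have h6 : ε / 2 ≤ gfun (us (φ k)) x := by
          have h7 := abs_le.mp (le_trans h1 h3)
          have h8 : ε < gfun u x := hx.2
          linarith [h7.1]
        have h9 : gfun c x = s * gfun (us (φ k)) x := by
          rw [hc, hcu (φ k), gfun_smul]
        rw [h9]
        calc ε / 2 * s = s * (ε / 2) := mul_comm _ _
          _ ≤ s * gfun (us (φ k)) x := mul_le_mul_of_nonneg_left h6 hsp.le
      have hΦlb : a * Real.exp (ε / 2 * s) ≤ Φ c := by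
        have hm1 : ∫ x in V, Real.exp (gfun c x) ∂μ ≤ Φ c := by
          apply MeasureTheory.setIntegral_mono_set (hintexp c)
          · exact Filter.Eventually.of_forall fun x => (Real.exp_pos _).le
          · exact HasSubset.Subset.eventuallyLE hVK
        have hm2 : Real.exp (ε / 2 * s) * (μ V).toReal ≤ ∫ x in V, Real.exp (gfun c x) ∂μ := by
          apply MeasureTheory.setIntegral_ge_of_const_le_real hVo.measurableSet hμVfin
          · exact fun x hx => Real.exp_le_exp.mpr (hgV x hx)
          · exact (hintexp c).mono_set hVK
        have : a * Real.exp (ε / 2 * s) = Real.exp (ε / 2 * s) * (μ V).toReal := by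
          rw [ha]; ring
        linarith
      have hGlb : a * Real.exp (ε / 2 * s) - Cy * s ≤ G c := by
        have hp := hpairb c
        have hcs : ‖c‖ = s := rfl
        rw [hcs] at hp
        simp only [hGdef]
        have : Φ c - pair y c ≥ a * Real.exp (ε / 2 * s) - s * Cy := by linarith
        calc a * Real.exp (ε / 2 * s) - Cy * s = a * Real.exp (ε / 2 * s) - s * Cy := by ring
          _ ≤ Φ c - pair y c := this
      have hst : T ≤ ε / 2 * s := by
        have h10 : 2 * T / ε ≤ s := le_trans hk2 hsk
        have h11 : ε / 2 * (2 * T / ε) = T := by field_simp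
        calc T = ε / 2 * (2 * T / ε) := h11.symm
          _ ≤ ε / 2 * s := mul_le_mul_of_nonneg_left h10 (by positivity)
      have h12 := hT (ε / 2 * s) hst
      have h13 : 2 * Cy / ε * (ε / 2 * s) = Cy * s := by field_simp
      rw [h13] at h12
      have h14 : G 0 < G c := lt_of_lt_of_le h12 hGlb
      exact absurd (hcs1 (φ k)) (not_le.mpr h14)
    · push_neg at hcase
      have hu0 : u ≠ 0 := by
        intro h
        rw [h] at hu1
        simp at hu1
      have hneg : pair y u < 0 :=
        pair_neg_of_interior hU hUne hK hKc hKm hy u hu0 hcase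
      have hev1 : ∀ᶠ k in Filter.atTop, pair y (us (φ k)) < pair y u / 2 := by
        have hcont : Filter.Tendsto (fun k => pair y (us (φ k))) Filter.atTop
            (nhds (pair y u)) := ((continuous_pair y).tendsto u).comp hconv
        apply hcont.eventually_lt_const
        linarith
      have hev2 : ∀ᶠ k : ℕ in Filter.atTop, (|G 0| + 1) / (-(pair y u) / 2) ≤ (k : ℝ) :=
        (tendsto_natCast_atTop_atTop (R := ℝ)).eventually_ge_atTop _
      obtain ⟨k, hk1, hk2⟩ := (hev1.and hev2).exists
      set c := cs (φ k) with hc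
      set s : ℝ := ‖cs (φ k)‖ with hs
      have hsp : 0 < s := hcsp _
      have hsk : (k : ℝ) ≤ s := hφk k
      set δ : ℝ := -(pair y u) / 2 with hδ
      have hδp : 0 < δ := by rw [hδ]; linarith
      have hps : pair y c = s * pair y (us (φ k)) := by
        rw [hc, hcu (φ k), pair_smul]
      have h1 : pair y c ≤ -(s * δ) := by
        rw [hps]
        have : pair y (us (φ k)) ≤ -δ := by rw [hδ]; linarith
        nlinarith
      have h2 : s * δ ≤ G c := by
        simp only [hGdef]
        have := hΦnn c
        linarith
      have h3 : (|G 0| + 1) ≤ s * δ := by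
        have h4 : (|G 0| + 1) / δ ≤ s := le_trans hk2 hsk
        calc |G 0| + 1 = (|G 0| + 1) / δ * δ := by field_simp
          _ ≤ s * δ := mul_le_mul_of_nonneg_right h4 hδp.le
      have h5 : G 0 < G c := by
        have := le_abs_self (G 0)
        linarith
      exact absurd (hcs1 (φ k)) (not_le.mpr h5)
  -- minimizer
  obtain ⟨R, hR⟩ := hbdd
  have h0B : (0 : Idx n (2*d) → ℝ) ∈ Metric.closedBall (0 : Idx n (2*d) → ℝ) (max R 0 + 1) := by
    simp only [Metric.mem_closedBall, dist_self]
    have := le_max_right R 0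
    linarith
  obtain ⟨cst, hcstB, hcstmin⟩ :=
    (isCompact_closedBall (0 : Idx n (2*d) → ℝ) (max R 0 + 1)).exists_isMinOn
      ⟨0, h0B⟩ hGc.continuousOn
  have hglob : ∀ c, G cst ≤ G c := by
    intro c
    by_cases hc : c ∈ Metric.closedBall (0 : Idx n (2*d) → ℝ) (max R 0 + 1)
    · exact hcstmin hc
    · have h1 : ¬ (G c ≤ G 0) := by
        intro hle
        apply hc
        simp only [Metric.mem_closedBall, dist_zero_right]
        have := hR c hle
        have := le_max_left R 0
        linarith
      push_neg at h1
      exact le_trans (hcstmin h0B) h1.le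
  -- first-order conditions
  refine ⟨polyOf cst, totalDegree_polyOf cst, ?_⟩
  intro α
  set e : Idx n (2*d) → ℝ := Pi.single α 1 with he
  set D : ℝ := ∫ x in K, Real.exp (gfun cst x) * evalMono x α.1 ∂μ with hD
  have hderiv : HasDerivAt (fun t : ℝ => Φ (cst + t • e)) D 0 := by
    have hkey := hasDerivAt_integral_of_dominated_loc_of_deriv_le (𝕜 := ℝ)
      (μ := μ.restrict K)
      (F := fun t (x : Fin n → ℝ) => Real.exp (gfun cst x + t * evalMono x α.1))
      (F' := fun t (x : Fin n → ℝ) =>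
        Real.exp (gfun cst x + t * evalMono x α.1) * evalMono x α.1)
      (bound := fun _ => Real.exp ((‖cst‖ + 1) * C) * C)
      (x₀ := (0:ℝ)) (s := Metric.ball (0:ℝ) 1) (Metric.ball_mem_nhds (0:ℝ) one_pos)
      (Filter.Eventually.of_forall fun t =>
        (Real.continuous_exp.comp ((continuous_gfun_x cst).add
          (continuous_const.mul (continuous_evalMono α.1)))).aestronglyMeasurable)
      (by
        have : Continuous fun x : Fin n → ℝ =>
            Real.exp (gfun cst x + (0:ℝ) * evalMono x α.1) :=
          Real.continuous_exp.comp ((continuous_gfun_x cst).add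
            (continuous_const.mul (continuous_evalMono α.1)))
        exact this.continuousOn.integrableOn_compact hKc)
      ((Real.continuous_exp.comp ((continuous_gfun_x cst).add
          (continuous_const.mul (continuous_evalMono α.1)))).mul
          (continuous_evalMono α.1)).aestronglyMeasurable
      (by
        refine (ae_restrict_mem hKm).mono fun x hx => ?_
        intro t ht
        have hev : |evalMono x α.1| ≤ C := by
          refine le_trans ?_ (hfC x hx)
          rw [hf]
          exact Finset.single_le_sum (f := fun β : Idx n (2*d) => |evalMono x β.1|)
            (fun β _ => abs_nonneg _) (Finset.mem_univ α)
        have hg : |gfun cst x| ≤ ‖cst‖ * C := hgb cst x hx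
        have htb : |t| < 1 := by simpa [Real.dist_eq] using Metric.mem_ball.mp ht
        rw [Real.norm_eq_abs, abs_mul, abs_of_pos (Real.exp_pos _)]
        have h1 : gfun cst x + t * evalMono x α.1 ≤ (‖cst‖ + 1) * C := by
          have h2 : t * evalMono x α.1 ≤ |t| * |evalMono x α.1| := by
            rw [← abs_mul]; exact le_abs_self _
          have h3 : |t| * |evalMono x α.1| ≤ 1 * C :=
            mul_le_mul htb.le hev (abs_nonneg _) zero_le_one
          have h4 : gfun cst x ≤ ‖cst‖ * C := le_trans (le_abs_self _) hg
          nlinarith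
        have h5 : Real.exp (gfun cst x + t * evalMono x α.1) ≤ Real.exp ((‖cst‖ + 1) * C) :=
          Real.exp_le_exp.mpr h1
        show Real.exp (gfun cst x + t * evalMono x α.1) * |evalMono x α.1| ≤
          Real.exp ((‖cst‖ + 1) * C) * C
        calc Real.exp (gfun cst x + t * evalMono x α.1) * |evalMono x α.1|
            ≤ Real.exp ((‖cst‖ + 1) * C) * |evalMono x α.1| :=
              mul_le_mul_of_nonneg_right h5 (abs_nonneg _)
          _ ≤ Real.exp ((‖cst‖ + 1) * C) * C :=
              mul_le_mul_of_nonneg_left hev (Real.exp_pos _).le)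
      (integrable_const _)
      (Filter.Eventually.of_forall fun x => by
        intro t ht
        have h1 : HasDerivAt (fun t : ℝ => gfun cst x + t * evalMono x α.1)
            (evalMono x α.1) t :=
          (hasDerivAt_mul_const (evalMono x α.1)).const_add (gfun cst x)
        exact h1.exp)
    have hfun : (fun t : ℝ => ∫ x, Real.exp (gfun cst x + t * evalMono x α.1) ∂(μ.restrict K))
        = fun t : ℝ => Φ (cst + t • e) := by
      funext t
      rw [hΦ]
      exact MeasureTheory.integral_congr_ae (Filter.Eventually.of_forall fun x => by
        show Real.exp (gfun cst x + t * evalMono x α.1) = Real.exp (gfun (cst + t • e) x)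
        rw [he, gfun_add_single])
    have hDeq : (∫ x, Real.exp (gfun cst x + (0:ℝ) * evalMono x α.1) * evalMono x α.1
        ∂(μ.restrict K)) = D := by
      rw [hD]
      exact MeasureTheory.integral_congr_ae (Filter.Eventually.of_forall fun x => by
        norm_num)
    have h2 := hkey.2
    rw [hfun, hDeq] at h2
    exact h2
  have hlin : HasDerivAt (fun t : ℝ => pair y (cst + t • e)) (y α) 0 := by
    have heq : (fun t : ℝ => pair y (cst + t • e)) = fun t => pair y cst + t * y α := by
      funext t
      rw [he, pair_add, pair_smul, pair_single]
    rw [heq]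
    exact (hasDerivAt_mul_const (y α)).const_add (pair y cst)
  have hlocal : IsLocalMin (fun t : ℝ => G (cst + t • e)) 0 := by
    have h0 : ∀ t : ℝ, (fun t : ℝ => G (cst + t • e)) 0 ≤ (fun t : ℝ => G (cst + t • e)) t := by
      intro t
      simp only [zero_smul, add_zero]
      exact hglob _
    exact Filter.Eventually.of_forall h0
  have hG' : HasDerivAt (fun t : ℝ => G (cst + t • e)) (D - y α) 0 := by
    simp only [hGdef]
    exact hderiv.sub hlin
  have hzero : D - y α = 0 := hlocal.hasDerivAt_eq_zero hG'
  have hfin : (∫ x in K, evalMono x α.1 * Real.exp (MvPolynomial.eval x (polyOf cst)) ∂μ) = D := by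
    rw [hD]
    exact MeasureTheory.integral_congr_ae (Filter.Eventually.of_forall fun x => by
      simp only [eval_polyOf]; ring)
  rw [hfin]
  linarith
end
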